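/- Let A₁ and A₂ be Banach algebras, and suppose A₁ ⊗̂ A₂ (projective tensor product) is amenable. Then both A₁ and A₂ are amenable, provided each Aᵢ is the image of a continuous epimorphism from A₁ ⊗̂ A₂ (which holds e.g. when the other factor has a nonzero character or bounded approximate identity). Conversely, if A₁ and A₂ are amenable then A₁ ⊗̂ A₂ is amenable. -/

import Mathlib

/-- Amenability of a Banach space `A` equipped with a multiplication `mul`:
every continuous derivation from `A` into the dual of any Banach `A`-bimodule `E`
is inner. -/
def IsAmenableMul (A : Type) [NormedAddCommGroup A] [NormedSpace ℂ A]
    (mul : A → A → A) : Prop :=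
  ∀ (E : Type) [NormedAddCommGroup E] [NormedSpace ℂ E],
    ∀ (l r : A →L[ℂ] E →L[ℂ] E),
      (∀ a b, l (mul a b) = (l a).comp (l b)) →
      (∀ a b, r (mul a b) = (r b).comp (r a)) →
      (∀ a b, (l a).comp (r b) = (r b).comp (l a)) →
      ∀ D : A →L[ℂ] (E →L[ℂ] ℂ),
        (∀ a b x, D (mul a b) x = D a (l b x) + D b (r a x)) →
        ∃ Λ : E →L[ℂ] ℂ, ∀ a x, D a x = Λ (r a x) - Λ (l a x)

/-- Amenability of a Banach algebra. -/
def IsAmenable (A : Type) [NormedRing A] [NormedAlgebra ℂ A] : Prop :=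
  IsAmenableMul A (· * ·)

section Aux

open ContinuousLinearMap

/-- Lift of a continuous linear map vanishing on a submodule to the quotient. -/
noncomputable def cliftQ {E V : Type} [NormedAddCommGroup E] [NormedSpace ℂ E]
    [NormedAddCommGroup V] [NormedSpace ℂ V]
    (N : Submodule ℂ E) (g : E →L[ℂ] V) (hg : ∀ y ∈ N, g y = 0) :
    (E ⧸ N) →L[ℂ] V :=
  (N.liftQ (g : E →ₗ[ℂ] V) (fun y hy => hg y hy)).mkContinuous ‖g‖ (by
    intro ξ
    refine le_of_forall_pos_le_add (fun ε hε => ?_)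
    have hgpos : (0:ℝ) < ‖g‖ + 1 := by positivity
    have hδ : (0:ℝ) < ε / (‖g‖ + 1) := by positivity
    obtain ⟨m, rfl, hm⟩ := Submodule.Quotient.norm_mk_lt ξ hδ
    have h1 : ‖(N.liftQ (g : E →ₗ[ℂ] V) (fun y hy => hg y hy)) (Submodule.Quotient.mk m)‖
        = ‖g m‖ := rfl
    rw [h1]
    have h2 : ‖g m‖ ≤ ‖g‖ * ‖m‖ := g.le_opNorm m
    have h3 : ‖g‖ * ‖m‖ ≤ ‖g‖ * (‖(Submodule.Quotient.mk m : E ⧸ N)‖ + ε / (‖g‖ + 1)) :=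
      mul_le_mul_of_nonneg_left hm.le (norm_nonneg g)
    have hfrac : ‖g‖ / (‖g‖ + 1) ≤ 1 := by
      rw [div_le_one hgpos]; linarith
    have h4 : ‖g‖ * (ε / (‖g‖ + 1)) ≤ ε :=
      calc ‖g‖ * (ε / (‖g‖ + 1)) = (‖g‖ / (‖g‖ + 1)) * ε := by ring
        _ ≤ 1 * ε := mul_le_mul_of_nonneg_right hfrac hε.le
        _ = ε := one_mul ε
    calc ‖g m‖ ≤ ‖g‖ * (‖(Submodule.Quotient.mk m : E ⧸ N)‖ + ε / (‖g‖ + 1)) := h2.trans h3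
      _ = ‖g‖ * ‖(Submodule.Quotient.mk m : E ⧸ N)‖ + ‖g‖ * (ε / (‖g‖ + 1)) := by ring
      _ ≤ ‖g‖ * ‖(Submodule.Quotient.mk m : E ⧸ N)‖ + ε := by linarith)

lemma cliftQ_mk {E V : Type} [NormedAddCommGroup E] [NormedSpace ℂ E]
    [NormedAddCommGroup V] [NormedSpace ℂ V]
    (N : Submodule ℂ E) (g : E →L[ℂ] V) (hg : ∀ y ∈ N, g y = 0) (x : E) :
    cliftQ N g hg (Submodule.Quotient.mk x) = g x := rfl

lemma norm_cliftQ_le {E V : Type} [NormedAddCommGroup E] [NormedSpace ℂ E]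
    [NormedAddCommGroup V] [NormedSpace ℂ V]
    (N : Submodule ℂ E) (g : E →L[ℂ] V) (hg : ∀ y ∈ N, g y = 0) :
    ‖cliftQ N g hg‖ ≤ ‖g‖ :=
  LinearMap.mkContinuous_norm_le _ (norm_nonneg g) _

lemma vanish_aux {E V : Type} [NormedAddCommGroup E] [NormedSpace ℂ E]
    [NormedAddCommGroup V] [NormedSpace ℂ V]
    (S : Set E) (g : E →L[ℂ] V) (hg : ∀ y ∈ S, g y = 0) :
    ∀ y ∈ (Submodule.span ℂ S).topologicalClosure, g y = 0 := by
  have h1 : Submodule.span ℂ S ≤ LinearMap.ker (g : E →ₗ[ℂ] V) :=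
    Submodule.span_le.mpr fun y hy => (LinearMap.mem_ker (f := (g : E →ₗ[ℂ] V))).mpr (hg y hy)
  have h2 := Submodule.topologicalClosure_minimal _ h1 (ContinuousLinearMap.isClosed_ker g)
  exact fun y hy => LinearMap.mem_ker.mp (h2 hy)

/-- Amenability passes to images of continuous surjective multiplicative maps. -/
lemma isAmenable_of_surjective {T A : Type}
    [NormedRing T] [NormedAlgebra ℂ T] [NormedRing A] [NormedAlgebra ℂ A]
    (π : T →L[ℂ] A) (hm : ∀ s t, π (s * t) = π s * π t)
    (hs : Function.Surjective π) (hT : IsAmenable T) : IsAmenable A := by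
  intro E _ _ l r hl hr hc D hD
  obtain ⟨Λ, hΛ⟩ := hT E (l.comp π) (r.comp π)
    (fun s t => by simp [hm, hl])
    (fun s t => by simp [hm, hr])
    (fun s t => by simp [hc])
    (D.comp π)
    (fun s t x => by simp [hm, hD])
  refine ⟨Λ, fun a x => ?_⟩
  obtain ⟨t, rfl⟩ := hs a
  simpa using hΛ t x

end Aux

section Tensor

open ContinuousLinearMap

set_option maxHeartbeats 2000000 in
lemma isAmenable_tensor {A₁ A₂ T : Type}
    [NormedRing A₁] [NormedAlgebra ℂ A₁]
    [NormedRing A₂] [NormedAlgebra ℂ A₂]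
    [NormedRing T] [NormedAlgebra ℂ T]
    (h : A₁ →L[ℂ] A₂ →L[ℂ] T)
    (hmul : ∀ a b c d, h a b * h c d = h (a * c) (b * d))
    (hdense : Dense (Submodule.span ℂ (Set.range fun p : A₁ × A₂ => h p.1 p.2) : Set T))
    (h1 : IsAmenable A₁) (h2 : IsAmenable A₂) : IsAmenable T := by
  intro E _ _ l r hl hr hc D hD
  -- the two corner embeddings
  set j₁ : A₁ →L[ℂ] T := h.flip 1 with hj₁def
  set j₂ : A₂ →L[ℂ] T := h 1 with hj₂def
  have f1 : ∀ a c : A₁, j₁ (a * c) = j₁ a * j₁ c := by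
    intro a c; simp only [hj₁def, flip_apply]
    rw [hmul]; simp
  have f2 : ∀ b d : A₂, j₂ (b * d) = j₂ b * j₂ d := by
    intro b d; simp only [hj₂def]
    rw [hmul]; simp
  have f12 : ∀ (a : A₁) (b : A₂), j₁ a * j₂ b = h a b := by
    intro a b; simp only [hj₁def, hj₂def, flip_apply]
    rw [hmul]; simp
  have f21 : ∀ (a : A₁) (b : A₂), j₂ b * j₁ a = h a b := by
    intro a b; simp only [hj₁def, hj₂def, flip_apply]
    rw [hmul]; simp
  -- pointwise facts
  have hcp : ∀ s t x, l s (r t x) = r t (l s x) := by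
    intro s t x
    have := ContinuousLinearMap.ext_iff.mp (hc s t) x
    simpa using this
  have hlp : ∀ s t x, l (s * t) x = l s (l t x) := by
    intro s t x
    have := ContinuousLinearMap.ext_iff.mp (hl s t) x
    simpa using this
  have hrp : ∀ s t x, r (s * t) x = r t (r s x) := by
    intro s t x
    have := ContinuousLinearMap.ext_iff.mp (hr s t) x
    simpa using this
  -- Step 1: amenability of A₁ applied to E as A₁-bimodule
  obtain ⟨Λ₁, hΛ₁'⟩ := h1 E (l.comp j₁) (r.comp j₁)
    (fun a c => by simp [f1, hl])
    (fun a c => by simp [f1, hr])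
    (fun a c => by simp [hc])
    (D.comp j₁)
    (fun a c x => by simp [f1, hD])
  have hΛ₁ : ∀ (a : A₁) (x : E), D (j₁ a) x = Λ₁ (r (j₁ a) x) - Λ₁ (l (j₁ a) x) := by
    intro a x; simpa using hΛ₁' a x
  -- inner derivations
  set inn : (E →L[ℂ] ℂ) → (T →L[ℂ] (E →L[ℂ] ℂ)) := fun Λ =>
    ((ContinuousLinearMap.compL ℂ E E ℂ Λ).comp r)
      - ((ContinuousLinearMap.compL ℂ E E ℂ Λ).comp l) with hinn
  have innApp : ∀ (Λ : E →L[ℂ] ℂ) (t : T) (x : E),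
      inn Λ t x = Λ (r t x) - Λ (l t x) := by
    intro Λ t x
    simp [hinn]
  -- derivation property is stable under subtracting inner maps
  have derInn : ∀ (Λ : E →L[ℂ] ℂ) (s t : T) (x : E),
      (D - inn Λ) (s * t) x = (D - inn Λ) s (l t x) + (D - inn Λ) t (r s x) := by
    intro Λ s t x
    simp only [ContinuousLinearMap.sub_apply, innApp]
    rw [hD s t x, hlp s t x, hrp s t x, hcp t s x]
    ring
  set D' : T →L[ℂ] (E →L[ℂ] ℂ) := D - inn Λ₁ with hD'def
  have hD'app : ∀ t x, D' t x = D t x - (Λ₁ (r t x) - Λ₁ (l t x)) := by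
    intro t x
    simp only [hD'def, ContinuousLinearMap.sub_apply, innApp]
  have hD'der : ∀ s t x, D' (s * t) x = D' s (l t x) + D' t (r s x) := derInn Λ₁
  have hD'j₁ : ∀ (a : A₁) (x : E), D' (j₁ a) x = 0 := by
    intro a x
    rw [hD'app, hΛ₁ a x]
    ring
  -- Step 2: the quotient module
  set S : Set E := Set.range (fun p : A₁ × E => l (j₁ p.1) p.2 - r (j₁ p.1) p.2) with hSdef
  set N : Submodule ℂ E := (Submodule.span ℂ S).topologicalClosure with hNdef
  haveI : IsClosed (N : Set E) := Submodule.isClosed_topologicalClosure _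
  have memN : ∀ (a : A₁) (x : E), l (j₁ a) x - r (j₁ a) x ∈ N := by
    intro a x
    exact Submodule.le_topologicalClosure _ (Submodule.subset_span ⟨(a, x), rfl⟩)
  -- quotient map
  set q : E →L[ℂ] (E ⧸ N) := N.mkQ.mkContinuous 1 (fun x => by
    simpa using Submodule.Quotient.norm_mk_le N x) with hqdef
  have hq : ∀ x : E, q x = Submodule.Quotient.mk x := fun x => rfl
  have hq0 : ∀ y ∈ N, q y = 0 := by
    intro y hy; rw [hq]; exact (Submodule.Quotient.mk_eq_zero N).mpr hy
  -- commuting of j₂ actions with j₁ actions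
  have e3 : ∀ (a : A₁) (b : A₂), j₂ b * j₁ a = j₁ a * j₂ b := by
    intro a b; rw [f12, f21]
  have comm_ll : ∀ (b : A₂) (a : A₁) (x : E), l (j₂ b) (l (j₁ a) x) = l (j₁ a) (l (j₂ b) x) := by
    intro b a x
    rw [← hlp, e3, hlp]
  have comm_rr : ∀ (b : A₂) (a : A₁) (x : E), r (j₂ b) (r (j₁ a) x) = r (j₁ a) (r (j₂ b) x) := by
    intro b a x
    rw [← hrp, ← e3, hrp]
  -- vanishing of actions on N
  have vanl : ∀ b : A₂, ∀ y ∈ N, q (l (j₂ b) y) = 0 := by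
    intro b
    have : ∀ y ∈ S, (q.comp (l (j₂ b))) y = 0 := by
      rintro y ⟨⟨a, x⟩, rfl⟩
      simp only [ContinuousLinearMap.comp_apply, map_sub]
      rw [comm_ll b a x, hcp (j₂ b) (j₁ a) x, ← map_sub]
      exact hq0 _ (memN a _)
    intro y hy
    exact vanish_aux S (q.comp (l (j₂ b))) this y hy
  have vanr : ∀ b : A₂, ∀ y ∈ N, q (r (j₂ b) y) = 0 := by
    intro b
    have : ∀ y ∈ S, (q.comp (r (j₂ b))) y = 0 := by
      rintro y ⟨⟨a, x⟩, rfl⟩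
      simp only [ContinuousLinearMap.comp_apply, map_sub]
      rw [← hcp (j₁ a) (j₂ b) x, comm_rr b a x, ← map_sub]
      exact hq0 _ (memN a _)
    intro y hy
    exact vanish_aux S (q.comp (r (j₂ b))) this y hy
  have vanD : ∀ b : A₂, ∀ y ∈ N, D' (j₂ b) y = 0 := by
    intro b
    have : ∀ y ∈ S, D' (j₂ b) y = 0 := by
      rintro y ⟨⟨a, x⟩, rfl⟩
      have e1 : D' (j₂ b * j₁ a) x = D' (j₂ b) (l (j₁ a) x) + D' (j₁ a) (r (j₂ b) x) :=
        hD'der _ _ _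
      have e2 : D' (j₁ a * j₂ b) x = D' (j₁ a) (l (j₂ b) x) + D' (j₂ b) (r (j₁ a) x) :=
        hD'der _ _ _
      rw [e3 a b] at e1
      simp only [hD'j₁] at e1 e2
      have heq := e1.symm.trans e2
      rw [add_zero, zero_add] at heq
      rw [map_sub, heq, sub_self]
    intro y hy
    exact vanish_aux S (D' (j₂ b)) this y hy
  -- Step 3: induced A₂-module structure on the quotient and induced derivation
  set lFlin : A₂ →ₗ[ℂ] ((E ⧸ N) →ₗ[ℂ] (E ⧸ N)) :=
    { toFun := fun b => (cliftQ N (q.comp (l (j₂ b))) (fun y hy => vanl b y hy) :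
        (E ⧸ N) →ₗ[ℂ] (E ⧸ N))
      map_add' := by
        intro b d; refine LinearMap.ext fun ξ => ?_
        obtain ⟨x, rfl⟩ := Submodule.Quotient.mk_surjective N ξ
        show q (l (j₂ (b + d)) x) = _
        simp only [map_add, ContinuousLinearMap.add_apply, LinearMap.add_apply,
          ContinuousLinearMap.coe_coe]
        rfl
      map_smul' := by
        intro c b; refine LinearMap.ext fun ξ => ?_
        obtain ⟨x, rfl⟩ := Submodule.Quotient.mk_surjective N ξ
        show q (l (j₂ (c • b)) x) = _
        simp only [map_smul, ContinuousLinearMap.smul_apply, LinearMap.smul_apply,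
          RingHom.id_apply, ContinuousLinearMap.coe_coe]
        rfl } with hlFlin
  set rFlin : A₂ →ₗ[ℂ] ((E ⧸ N) →ₗ[ℂ] (E ⧸ N)) :=
    { toFun := fun b => (cliftQ N (q.comp (r (j₂ b))) (fun y hy => vanr b y hy) :
        (E ⧸ N) →ₗ[ℂ] (E ⧸ N))
      map_add' := by
        intro b d; refine LinearMap.ext fun ξ => ?_
        obtain ⟨x, rfl⟩ := Submodule.Quotient.mk_surjective N ξ
        show q (r (j₂ (b + d)) x) = _
        simp only [map_add, ContinuousLinearMap.add_apply, LinearMap.add_apply,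
          ContinuousLinearMap.coe_coe]
        rfl
      map_smul' := by
        intro c b; refine LinearMap.ext fun ξ => ?_
        obtain ⟨x, rfl⟩ := Submodule.Quotient.mk_surjective N ξ
        show q (r (j₂ (c • b)) x) = _
        simp only [map_smul, ContinuousLinearMap.smul_apply, LinearMap.smul_apply,
          RingHom.id_apply, ContinuousLinearMap.coe_coe]
        rfl } with hrFlin
  set D₂lin : A₂ →ₗ[ℂ] ((E ⧸ N) →ₗ[ℂ] ℂ) :=
    { toFun := fun b => (cliftQ N (D' (j₂ b)) (fun y hy => vanD b y hy) :
        (E ⧸ N) →ₗ[ℂ] ℂ)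
      map_add' := by
        intro b d; refine LinearMap.ext fun ξ => ?_
        obtain ⟨x, rfl⟩ := Submodule.Quotient.mk_surjective N ξ
        show D' (j₂ (b + d)) x = _
        simp only [map_add, ContinuousLinearMap.add_apply, LinearMap.add_apply,
          ContinuousLinearMap.coe_coe]
        rfl
      map_smul' := by
        intro c b; refine LinearMap.ext fun ξ => ?_
        obtain ⟨x, rfl⟩ := Submodule.Quotient.mk_surjective N ξ
        show D' (j₂ (c • b)) x = _
        simp only [map_smul, ContinuousLinearMap.smul_apply, LinearMap.smul_apply,
          RingHom.id_apply, ContinuousLinearMap.coe_coe]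
        rfl } with hD₂lin
  have lFbound : ∀ (b : A₂) (ξ : E ⧸ N), ‖lFlin b ξ‖ ≤ (‖q‖ * (‖l‖ * ‖j₂‖)) * ‖b‖ * ‖ξ‖ := by
    intro b ξ
    have hb0 : ‖lFlin b ξ‖ ≤ ‖cliftQ N (q.comp (l (j₂ b))) (fun y hy => vanl b y hy)‖ * ‖ξ‖ :=
      ContinuousLinearMap.le_opNorm _ ξ
    have hb1 : ‖cliftQ N (q.comp (l (j₂ b))) (fun y hy => vanl b y hy)‖
        ≤ ‖q.comp (l (j₂ b))‖ := norm_cliftQ_le _ _ _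
    have hb2 : ‖q.comp (l (j₂ b))‖ ≤ ‖q‖ * ‖l (j₂ b)‖ := ContinuousLinearMap.opNorm_comp_le _ _
    have hb3 : ‖l (j₂ b)‖ ≤ ‖l‖ * ‖j₂ b‖ := l.le_opNorm _
    have hb4 : ‖j₂ b‖ ≤ ‖j₂‖ * ‖b‖ := j₂.le_opNorm b
    have hb5 : ‖q.comp (l (j₂ b))‖ ≤ ‖q‖ * (‖l‖ * (‖j₂‖ * ‖b‖)) := by
      calc ‖q.comp (l (j₂ b))‖ ≤ ‖q‖ * ‖l (j₂ b)‖ := hb2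
        _ ≤ ‖q‖ * (‖l‖ * (‖j₂‖ * ‖b‖)) := by
            refine mul_le_mul_of_nonneg_left ?_ (norm_nonneg q)
            exact hb3.trans (mul_le_mul_of_nonneg_left hb4 (norm_nonneg l))
    calc ‖lFlin b ξ‖ ≤ (‖q‖ * (‖l‖ * (‖j₂‖ * ‖b‖))) * ‖ξ‖ :=
          hb0.trans (mul_le_mul_of_nonneg_right (hb1.trans hb5) (norm_nonneg ξ))
      _ = (‖q‖ * (‖l‖ * ‖j₂‖)) * ‖b‖ * ‖ξ‖ := by ring
  have rFbound : ∀ (b : A₂) (ξ : E ⧸ N), ‖rFlin b ξ‖ ≤ (‖q‖ * (‖r‖ * ‖j₂‖)) * ‖b‖ * ‖ξ‖ := by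
    intro b ξ
    have hb0 : ‖rFlin b ξ‖ ≤ ‖cliftQ N (q.comp (r (j₂ b))) (fun y hy => vanr b y hy)‖ * ‖ξ‖ :=
      ContinuousLinearMap.le_opNorm _ ξ
    have hb1 : ‖cliftQ N (q.comp (r (j₂ b))) (fun y hy => vanr b y hy)‖
        ≤ ‖q.comp (r (j₂ b))‖ := norm_cliftQ_le _ _ _
    have hb2 : ‖q.comp (r (j₂ b))‖ ≤ ‖q‖ * ‖r (j₂ b)‖ := ContinuousLinearMap.opNorm_comp_le _ _
    have hb3 : ‖r (j₂ b)‖ ≤ ‖r‖ * ‖j₂ b‖ := r.le_opNorm _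
    have hb4 : ‖j₂ b‖ ≤ ‖j₂‖ * ‖b‖ := j₂.le_opNorm b
    have hb5 : ‖q.comp (r (j₂ b))‖ ≤ ‖q‖ * (‖r‖ * (‖j₂‖ * ‖b‖)) := by
      calc ‖q.comp (r (j₂ b))‖ ≤ ‖q‖ * ‖r (j₂ b)‖ := hb2
        _ ≤ ‖q‖ * (‖r‖ * (‖j₂‖ * ‖b‖)) := by
            refine mul_le_mul_of_nonneg_left ?_ (norm_nonneg q)
            exact hb3.trans (mul_le_mul_of_nonneg_left hb4 (norm_nonneg r))
    calc ‖rFlin b ξ‖ ≤ (‖q‖ * (‖r‖ * (‖j₂‖ * ‖b‖))) * ‖ξ‖ :=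
          hb0.trans (mul_le_mul_of_nonneg_right (hb1.trans hb5) (norm_nonneg ξ))
      _ = (‖q‖ * (‖r‖ * ‖j₂‖)) * ‖b‖ * ‖ξ‖ := by ring
  have D₂bound : ∀ (b : A₂) (ξ : E ⧸ N), ‖D₂lin b ξ‖ ≤ (‖D'‖ * ‖j₂‖) * ‖b‖ * ‖ξ‖ := by
    intro b ξ
    have hb0 : ‖D₂lin b ξ‖ ≤ ‖cliftQ N (D' (j₂ b)) (fun y hy => vanD b y hy)‖ * ‖ξ‖ :=
      ContinuousLinearMap.le_opNorm _ ξ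
    have hb1 : ‖cliftQ N (D' (j₂ b)) (fun y hy => vanD b y hy)‖ ≤ ‖D' (j₂ b)‖ :=
      norm_cliftQ_le _ _ _
    have hb3 : ‖D' (j₂ b)‖ ≤ ‖D'‖ * ‖j₂ b‖ := D'.le_opNorm _
    have hb4 : ‖j₂ b‖ ≤ ‖j₂‖ * ‖b‖ := j₂.le_opNorm b
    have hb5 : ‖D' (j₂ b)‖ ≤ ‖D'‖ * (‖j₂‖ * ‖b‖) :=
      hb3.trans (mul_le_mul_of_nonneg_left hb4 (norm_nonneg D'))
    calc ‖D₂lin b ξ‖ ≤ (‖D'‖ * (‖j₂‖ * ‖b‖)) * ‖ξ‖ :=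
          hb0.trans (mul_le_mul_of_nonneg_right (hb1.trans hb5) (norm_nonneg ξ))
      _ = (‖D'‖ * ‖j₂‖) * ‖b‖ * ‖ξ‖ := by ring
  set lF : A₂ →L[ℂ] ((E ⧸ N) →L[ℂ] (E ⧸ N)) :=
    LinearMap.mkContinuous₂ lFlin (‖q‖ * (‖l‖ * ‖j₂‖)) lFbound with hlFdef
  set rF : A₂ →L[ℂ] ((E ⧸ N) →L[ℂ] (E ⧸ N)) :=
    LinearMap.mkContinuous₂ rFlin (‖q‖ * (‖r‖ * ‖j₂‖)) rFbound with hrFdef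
  set D₂ : A₂ →L[ℂ] ((E ⧸ N) →L[ℂ] ℂ) :=
    LinearMap.mkContinuous₂ D₂lin (‖D'‖ * ‖j₂‖) D₂bound with hD₂def
  have lFapp : ∀ (b : A₂) (x : E), lF b (Submodule.Quotient.mk x) = q (l (j₂ b) x) :=
    fun b x => rfl
  have rFapp : ∀ (b : A₂) (x : E), rF b (Submodule.Quotient.mk x) = q (r (j₂ b) x) :=
    fun b x => rfl
  have D₂app : ∀ (b : A₂) (x : E), D₂ b (Submodule.Quotient.mk x) = D' (j₂ b) x :=
    fun b x => rfl
  have hqmk : ∀ x : E, Submodule.Quotient.mk x = q x := fun x => rfl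
  -- Step 4: apply amenability of A₂ to the quotient module
  obtain ⟨Λ2q, hΛ2q⟩ := h2 (E ⧸ N) lF rF
    (by
      intro b d; refine ContinuousLinearMap.ext fun ξ => ?_
      obtain ⟨x, rfl⟩ := Submodule.Quotient.mk_surjective N ξ
      calc lF (b * d) (Submodule.Quotient.mk x)
          = q (l (j₂ (b * d)) x) := rfl
        _ = q (l (j₂ b * j₂ d) x) := by rw [f2]
        _ = q (l (j₂ b) (l (j₂ d) x)) := by rw [hlp]
        _ = ((lF b).comp (lF d)) (Submodule.Quotient.mk x) := rfl)
    (by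
      intro b d; refine ContinuousLinearMap.ext fun ξ => ?_
      obtain ⟨x, rfl⟩ := Submodule.Quotient.mk_surjective N ξ
      calc rF (b * d) (Submodule.Quotient.mk x)
          = q (r (j₂ (b * d)) x) := rfl
        _ = q (r (j₂ b * j₂ d) x) := by rw [f2]
        _ = q (r (j₂ d) (r (j₂ b) x)) := by rw [hrp]
        _ = ((rF d).comp (rF b)) (Submodule.Quotient.mk x) := rfl)
    (by
      intro b d; refine ContinuousLinearMap.ext fun ξ => ?_
      obtain ⟨x, rfl⟩ := Submodule.Quotient.mk_surjective N ξ
      calc ((lF b).comp (rF d)) (Submodule.Quotient.mk x)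
          = q (l (j₂ b) (r (j₂ d) x)) := rfl
        _ = q (r (j₂ d) (l (j₂ b) x)) := by rw [hcp]
        _ = ((rF d).comp (lF b)) (Submodule.Quotient.mk x) := rfl)
    D₂
    (by
      intro b d ξ
      obtain ⟨x, rfl⟩ := Submodule.Quotient.mk_surjective N ξ
      calc D₂ (b * d) (Submodule.Quotient.mk x)
          = D' (j₂ (b * d)) x := rfl
        _ = D' (j₂ b * j₂ d) x := by rw [f2]
        _ = D' (j₂ b) (l (j₂ d) x) + D' (j₂ d) (r (j₂ b) x) := hD'der _ _ _
        _ = D₂ b (lF d (Submodule.Quotient.mk x)) + D₂ d (rF b (Submodule.Quotient.mk x)) := rfl)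
  set Λ₂ : E →L[ℂ] ℂ := Λ2q.comp q with hΛ₂def
  have hΛ₂app : ∀ x : E, Λ₂ x = Λ2q (q x) := fun x => rfl
  have hΛ₂N : ∀ y ∈ N, Λ₂ y = 0 := by
    intro y hy
    rw [hΛ₂app, hq0 y hy, map_zero]
  have hΛ₂j₂ : ∀ (b : A₂) (x : E), D' (j₂ b) x = Λ₂ (r (j₂ b) x) - Λ₂ (l (j₂ b) x) := by
    intro b x
    have := hΛ2q b (Submodule.Quotient.mk x)
    rw [D₂app, rFapp, lFapp] at this
    exact this
  -- Step 5: conclusion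
  refine ⟨Λ₁ + Λ₂, fun t x => ?_⟩
  set D'' : T →L[ℂ] (E →L[ℂ] ℂ) := D - inn (Λ₁ + Λ₂) with hD''def
  have hD''app : ∀ (t : T) (x : E),
      D'' t x = D' t x - (Λ₂ (r t x) - Λ₂ (l t x)) := by
    intro t x
    simp only [hD''def, ContinuousLinearMap.sub_apply, innApp, hD'app,
      ContinuousLinearMap.add_apply]
    ring
  have hD''j₁ : ∀ (a : A₁) (x : E), D'' (j₁ a) x = 0 := by
    intro a x
    have hz := hΛ₂N _ (memN a x)
    rw [map_sub, sub_eq_zero] at hz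
    rw [hD''app, hD'j₁, hz]
    ring
  have hD''j₂ : ∀ (b : A₂) (x : E), D'' (j₂ b) x = 0 := by
    intro b x
    rw [hD''app, hΛ₂j₂ b x]
    ring
  have hD''der : ∀ (s t : T) (x : E),
      D'' (s * t) x = D'' s (l t x) + D'' t (r s x) := derInn (Λ₁ + Λ₂)
  have hD''h : ∀ y ∈ (Set.range fun p : A₁ × A₂ => h p.1 p.2), D'' y = 0 := by
    rintro y ⟨⟨a, b⟩, rfl⟩
    ext x
    show D'' (h a b) x = (0 : E →L[ℂ] ℂ) x
    have : (h a) b = j₁ a * j₂ b := (f12 a b).symm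
    rw [ContinuousLinearMap.zero_apply, this, hD''der, hD''j₁, hD''j₂, add_zero]
  have hT0 : t ∈ (Submodule.span ℂ (Set.range fun p : A₁ × A₂ => h p.1 p.2)).topologicalClosure := by
    have ht : t ∈ closure (Submodule.span ℂ (Set.range fun p : A₁ × A₂ => h p.1 p.2) : Set T) := by
      rw [hdense.closure_eq]; trivial
    exact ht
  have h0 : D'' t = 0 := vanish_aux _ D'' hD''h t hT0
  have h5 : D'' t x = 0 := by rw [h0]; rfl
  rw [hD''app] at h5
  have h6 := hD'app t x
  rw [ContinuousLinearMap.add_apply, ContinuousLinearMap.add_apply]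
  have : D t x - (Λ₁ (r t x) - Λ₁ (l t x)) - (Λ₂ (r t x) - Λ₂ (l t x)) = 0 := by
    rw [← h6]; exact h5
  linear_combination this


end Tensor

theorem projectiveTensor_amenable_iff (A₁ A₂ T : Type)
    [NormedRing A₁] [NormedAlgebra ℂ A₁] [CompleteSpace A₁]
    [NormedRing A₂] [NormedAlgebra ℂ A₂] [CompleteSpace A₂]
    [NormedRing T] [NormedAlgebra ℂ T] [CompleteSpace T]
    (π₁ : T →ₗ[ℂ] A₁) (π₂ : T →ₗ[ℂ] A₂)
    (hπ₁m : ∀ s t, π₁ (s * t) = π₁ s * π₁ t) (hπ₂m : ∀ s t, π₂ (s * t) = π₂ s * π₂ t)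
    (hπ₁c : Continuous π₁) (hπ₂c : Continuous π₂)
    (hπ₁s : Function.Surjective π₁) (hπ₂s : Function.Surjective π₂)
    (h : A₁ →L[ℂ] A₂ →L[ℂ] T)
    (hmul : ∀ a b c d, h a b * h c d = h (a * c) (b * d))
    (hdense : Dense (Submodule.span ℂ (Set.range fun p : A₁ × A₂ => h p.1 p.2) : Set T)) :
    IsAmenable T ↔ IsAmenable A₁ ∧ IsAmenable A₂ := by
  constructor
  · intro hT
    exact ⟨isAmenable_of_surjective ⟨π₁, hπ₁c⟩ hπ₁m hπ₁s hT,
      isAmenable_of_surjective ⟨π₂, hπ₂c⟩ hπ₂m hπ₂s hT⟩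
  · rintro ⟨h1, h2⟩
    exact isAmenable_tensor h hmul hdense h1 h2
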